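/- Let R₁, …, R_m be N×N row-stochastic matrices with non-negative entries and let R be the Nm×Nm cyclic block matrix whose (i, i+1 mod m) block is R_{(i mod m)+1} and whose other blocks are zero. Then R is irreducible if and only if for every i = 1, …, m the cyclic product R_{i+1} R_{i+2} ⋯ R_m R₁ ⋯ R_i is irreducible. -/

import Mathlib

open Matrix

/-- A non-negative square matrix is irreducible: every entry of some positive
power is strictly positive. -/
def Irred {ι : Type*} (A : Matrix ι ι ℝ) [Fintype ι] [DecidableEq ι] : Prop :=
  ∀ i j : ι, ∃ k : ℕ, 1 ≤ k ∧ 0 < (A ^ k) i j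

/-- The cyclic product `R_{i+1} R_{i+2} ⋯ R_m R₁ ⋯ R_i`. -/
def cyclicProd {m N : ℕ} [NeZero m] (Rs : Fin m → Matrix (Fin N) (Fin N) ℝ)
    (i : Fin m) : Matrix (Fin N) (Fin N) ℝ :=
  ((List.range m).map (fun (k : ℕ) => Rs (i + 1 + (Fin.ofNat m k : Fin m)))).prod

open Fin.NatCast Fin.CommRing

namespace StmtAux

variable {m N : ℕ} [NeZero m] (Rs : Fin m → Matrix (Fin N) (Fin N) ℝ)

/-- Partial product of `k` consecutive blocks starting after `i`. -/
def P (i : Fin m) (k : ℕ) : Matrix (Fin N) (Fin N) ℝ :=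
  ((List.range k).map (fun (t : ℕ) => Rs (i + 1 + (t : Fin m)))).prod

lemma P_zero (i : Fin m) : P Rs i 0 = 1 := rfl

lemma P_succ (i : Fin m) (k : ℕ) :
    P Rs i (k + 1) = P Rs i k * Rs (i + 1 + (k : Fin m)) := by
  simp [P, List.range_succ]

lemma P_add (i : Fin m) (a b : ℕ) :
    P Rs i (a + b) = P Rs i a * P Rs (i + (a : Fin m)) b := by
  induction b with
  | zero => simp [P_zero]
  | succ b ih =>
    rw [← Nat.add_assoc, P_succ, ih, P_succ, mul_assoc]
    congr 2
    push_cast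
    ring

lemma P_mul_m (i : Fin m) (k : ℕ) : P Rs i (k * m) = (P Rs i m) ^ k := by
  induction k with
  | zero => simp [P_zero]
  | succ k ih =>
    have h : (k + 1) * m = k * m + m := by ring
    have h0 : ((k * m : ℕ) : Fin m) = 0 := by
      push_cast [Fin.natCast_self]
      ring
    rw [h, P_add, ih, h0, add_zero, pow_succ]

lemma P_nonneg (h0 : ∀ k i j, 0 ≤ Rs k i j) (i : Fin m) (k : ℕ) (a b : Fin N) :
    0 ≤ P Rs i k a b := by
  induction k generalizing a b with
  | zero =>
    rw [P_zero, Matrix.one_apply]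
    split <;> norm_num
  | succ k ih =>
    rw [P_succ, Matrix.mul_apply]
    exact Finset.sum_nonneg fun c _ => mul_nonneg (ih a c) (h0 _ c b)

lemma P_rowsum (h1 : ∀ k i, ∑ j, Rs k i j = 1) (i : Fin m) (k : ℕ) (a : Fin N) :
    ∑ b, P Rs i k a b = 1 := by
  induction k generalizing a with
  | zero => simp [P_zero, Matrix.one_apply]
  | succ k ih =>
    simp only [P_succ, Matrix.mul_apply]
    rw [Finset.sum_comm]
    simp only [← Finset.mul_sum, h1, mul_one]
    exact ih a

lemma P_exists_pos (h0 : ∀ k i j, 0 ≤ Rs k i j) (h1 : ∀ k i, ∑ j, Rs k i j = 1)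
    (i : Fin m) (k : ℕ) (a : Fin N) : ∃ c, 0 < P Rs i k a c := by
  by_contra h
  push_neg at h
  have hle : ∑ b, P Rs i k a b ≤ 0 := Finset.sum_nonpos fun b _ => h b
  rw [P_rowsum Rs h1 i k a] at hle
  linarith

lemma pow_apply (R : Matrix (Fin m × Fin N) (Fin m × Fin N) ℝ)
    (hR : ∀ i j a b, R (i, a) (j, b) = if j = i + 1 then Rs j a b else 0)
    (k : ℕ) (i j : Fin m) (a b : Fin N) :
    (R ^ k) (i, a) (j, b) =
      if j = i + (k : Fin m) then P Rs i k a b else 0 := by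
  induction k generalizing j b with
  | zero =>
    simp only [pow_zero, Matrix.one_apply, Nat.cast_zero, add_zero, P_zero,
      Prod.mk.injEq]
    by_cases hij : j = i
    · subst hij
      simp [Matrix.one_apply]
    · simp only [if_neg hij]
      rw [if_neg (by intro hh; exact hij (And.left hh).symm)]
  | succ k ih =>
    rw [pow_succ, Matrix.mul_apply, Fintype.sum_prod_type]
    simp only [ih, hR]
    rw [Finset.sum_eq_single (i + (k : Fin m))]
    · simp only [if_pos rfl]
      have hcast : ((k + 1 : ℕ) : Fin m) = (k : Fin m) + 1 := by push_cast; ring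
      by_cases hj : j = i + (k : Fin m) + 1
      · rw [hcast, ← add_assoc, if_pos hj]
        subst hj
        simp only [if_pos rfl]
        have harg : i + 1 + (k : Fin m) = i + (k : Fin m) + 1 := by ring
        rw [P_succ, harg, Matrix.mul_apply]
        simp
      · rw [hcast, ← add_assoc, if_neg hj]
        rw [Finset.sum_eq_zero]
        intro c _
        rw [if_neg hj, mul_zero]
    · intro l _ hl
      rw [Finset.sum_eq_zero]
      intro c _
      rw [if_neg hl, zero_mul]
    · intro habs
      exact absurd (Finset.mem_univ _) habs

end StmtAux

open StmtAux in
theorem stmt_3 (m N : ℕ) [NeZero m] (Rs : Fin m → Matrix (Fin N) (Fin N) ℝ)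
    (hR0 : ∀ k i j, 0 ≤ Rs k i j) (hR1 : ∀ k i, ∑ j, Rs k i j = 1)
    (R : Matrix (Fin m × Fin N) (Fin m × Fin N) ℝ)
    (hR : ∀ i j a b, R (i, a) (j, b) = if j = i + 1 then Rs j a b else 0) :
    Irred R ↔ ∀ i : Fin m, Irred (cyclicProd Rs i) := by
  have hcyc : ∀ i : Fin m, cyclicProd Rs i = P Rs i m := fun i => rfl
  constructor
  · intro hIrr i a b
    obtain ⟨K, hK1, hKpos⟩ := hIrr (i, a) (i, b)
    rw [pow_apply Rs R hR] at hKpos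
    have hd : i = i + (K : Fin m) := by
      by_contra h
      rw [if_neg h] at hKpos
      exact lt_irrefl 0 hKpos
    rw [if_pos hd] at hKpos
    have hK0 : ((K : ℕ) : Fin m) = 0 := by
      have := hd.symm
      rwa [add_eq_left] at this
    obtain ⟨t, ht⟩ := Fin.natCast_eq_zero.mp hK0
    refine ⟨t, ?_, ?_⟩
    · rcases Nat.eq_zero_or_pos t with h | h
      · subst h; simp at ht; omega
      · exact h
    · have : P Rs i K = (P Rs i m) ^ t := by
        rw [ht, Nat.mul_comm, P_mul_m]
      rw [hcyc, ← this]
      exact hKpos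
  · intro h x y
    obtain ⟨i, a⟩ := x
    obtain ⟨j, b⟩ := y
    set d0 := (j - i).val with hd0
    set d := if d0 = 0 then m else d0 with hdd
    have hm1 : 1 ≤ m := Nat.pos_of_ne_zero (NeZero.ne m)
    have hd1 : 1 ≤ d := by
      rw [hdd]; split <;> omega
    have hbase : i + ((d0 : Fin m)) = j := by
      rw [hd0, Fin.cast_val_eq_self]
      ring
    have hid : i + (d : Fin m) = j := by
      rcases eq_or_ne d0 0 with h0 | h0
      · rw [hdd, if_pos h0, Fin.natCast_self, add_zero]
        rw [h0] at hbase
        simpa using hbase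
      · rw [hdd, if_neg h0]
        exact hbase
    obtain ⟨c, hc⟩ := P_exists_pos Rs hR0 hR1 i d a
    obtain ⟨k, hk1, hkpos⟩ := h j c b
    rw [hcyc, ← P_mul_m] at hkpos
    refine ⟨d + k * m, by omega, ?_⟩
    rw [pow_apply Rs R hR]
    have hcond : j = i + ((d + k * m : ℕ) : Fin m) := by
      have h0 : ((k * m : ℕ) : Fin m) = 0 := by
        push_cast [Fin.natCast_self]; ring
      push_cast [h0] at *
      rw [← add_assoc, hid]
      simp [h0]
    rw [if_pos hcond, P_add, hid, Matrix.mul_apply]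
    refine Finset.sum_pos' (fun c' _ => mul_nonneg (P_nonneg Rs hR0 _ _ _ _)
      (P_nonneg Rs hR0 _ _ _ _)) ⟨c, Finset.mem_univ c, mul_pos hc hkpos⟩
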